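/- arXiv:2411.03972 — 3 statements merged into one kernel-verified Lean document; each statement's English description precedes it below -/
import Mathlib

section
/- Let B be an N×M complex matrix, A = B B†, and let y : ℝ → ℂ^N be twice differentiable with ÿ(t) = −A y(t) for all t. Define ψ(t) = (ẏ(t), i B† y(t)) ∈ ℂ^{N+M} and the block matrix H = −[[0, B], [B†, 0]] of size (N+M)×(N+M). Then ψ satisfies the Schrödinger-type equation i ψ′(t) = H ψ(t) for all t. -/
open Matrix

/-- The incidence-matrix reformulation of the harmonic oscillator model:
if `ÿ = -A y` with `A = B Bᴴ`, then `ψ(t) = (ẏ(t), i Bᴴ y(t))` satisfies the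
Schrödinger-type equation `i ψ'(t) = H ψ(t)` with `H = -[[0, B], [Bᴴ, 0]]`,
equivalently `ψ'(t) = -i H ψ(t)`. -/
theorem harmonic_oscillator_schrodinger_reformulation
    {N M : ℕ} (B : Matrix (Fin N) (Fin M) ℂ) (A : Matrix (Fin N) (Fin N) ℂ)
    (hA : A = B * Bᴴ)
    (y v a : ℝ → Fin N → ℂ)
    (hy : ∀ t, HasDerivAt y (v t) t)
    (hv : ∀ t, HasDerivAt v (a t) t)
    (ha : ∀ t, a t = -(A *ᵥ y t))
    (ψ : ℝ → (Fin N ⊕ Fin M → ℂ))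
    (hψ : ψ = fun t => Sum.elim (v t) (Complex.I • (Bᴴ *ᵥ y t)))
    (H : Matrix (Fin N ⊕ Fin M) (Fin N ⊕ Fin M) ℂ)
    (hH : H = -Matrix.fromBlocks 0 B Bᴴ 0) :
    ∀ t, HasDerivAt ψ (-Complex.I • (H *ᵥ ψ t)) t := by
  subst hψ hH hA
  intro t
  have key : HasDerivAt (fun t => Sum.elim (v t) (Complex.I • (Bᴴ *ᵥ y t)))
      (Sum.elim (a t) (Complex.I • (Bᴴ *ᵥ v t))) t := by
    rw [hasDerivAt_pi]
    rintro (i | j)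
    · exact hasDerivAt_pi.mp (hv t) i
    · simp only [Sum.elim_inr, Pi.smul_apply, mulVec, dotProduct, smul_eq_mul,
        Finset.mul_sum]
      exact HasDerivAt.fun_sum fun k _ =>
        ((hasDerivAt_pi.mp (hy t) k).const_mul _).const_mul _
  convert key using 1
  funext i
  rcases i with i | j <;>
    simp only [Pi.smul_apply, Sum.elim_inl, Sum.elim_inr, neg_mulVec, mulVec_neg,
      Pi.neg_apply, smul_eq_mul, mulVec, dotProduct, fromBlocks_apply₁₁,
      fromBlocks_apply₁₂, fromBlocks_apply₂₁, fromBlocks_apply₂₂,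
      Fintype.sum_sum_type, ha, Matrix.mul_apply, Matrix.zero_apply, zero_mul,
      Finset.sum_const_zero, zero_add, add_zero, neg_mul_neg, Finset.mul_sum]
  · rw [Finset.sum_comm, ← Finset.sum_neg_distrib]
    apply Finset.sum_congr rfl
    intro k _
    rw [Finset.sum_mul, ← Finset.sum_neg_distrib]
    apply Finset.sum_congr rfl
    intro l _
    ring_nf
    rw [Complex.I_sq]
    ring
end

section
/- For every natural number m ≥ 1, the integral ∫₀^{π/2} sin(2θ)^m dθ satisfies ∫₀^{π/2} sin(2θ)^m dθ ≥ (1/2) √(π/(2m)). Combined with the upper bound ∫₀^{π/2} sin(2θ)^m dθ ≤ ∫_{−∞}^{∞} e^{−2m x²} dx = √(π/(2m)), the normalization of the angle density sin^m(2θ) is within a constant factor of that of the Gaussian e^{−2m(θ−π/4)²}. -/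
open MeasureTheory intervalIntegral Real

lemma wallis_prod (n : ℕ) :
    ((n : ℝ) + 1) * ((∫ x in (0:ℝ)..π, Real.sin x ^ (n+1)) * (∫ x in (0:ℝ)..π, Real.sin x ^ n))
      = 2 * π := by
  induction n with
  | zero => simp [integral_sin]; norm_num
  | succ k ih =>
      rw [show k + 1 + 1 = k + 2 from rfl, integral_sin_pow]
      simp only [Real.sin_zero, Real.sin_pi, ne_eq, Nat.add_one_ne_zero, not_false_eq_true, zero_pow, zero_mul, zero_add]
      push_cast
      have hk2 : (k : ℝ) + 2 ≠ 0 := by positivity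
      field_simp
      nlinarith [ih]

/-- The normalization constant of the angle density `sin^m(2θ)` is within a constant
factor of that of the Gaussian `e^{-2m(θ-π/4)²}`: for `m ≥ 1`,
`(1/2)√(π/(2m)) ≤ ∫₀^{π/2} sin(2θ)^m dθ ≤ ∫_ℝ e^{-2mx²} dx = √(π/(2m))`. -/
theorem integral_sin_two_theta_pow_bounds (m : ℕ) (hm : 1 ≤ m) :
    (1 / 2) * Real.sqrt (Real.pi / (2 * m)) ≤
        (∫ θ in (0 : ℝ)..(Real.pi / 2), Real.sin (2 * θ) ^ m) ∧
      (∫ θ in (0 : ℝ)..(Real.pi / 2), Real.sin (2 * θ) ^ m) ≤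
        (∫ x : ℝ, Real.exp (-(2 * m * x ^ 2))) ∧
      (∫ x : ℝ, Real.exp (-(2 * m * x ^ 2))) = Real.sqrt (Real.pi / (2 * m)) := by
  have hm0 : (0:ℝ) < m := by exact_mod_cast hm
  set I : ℕ → ℝ := fun n => ∫ x in (0:ℝ)..π, Real.sin x ^ n with hI
  -- substitution
  have hsub : (∫ θ in (0 : ℝ)..(Real.pi / 2), Real.sin (2 * θ) ^ m) = (1/2) * I m := by
    have := intervalIntegral.integral_comp_mul_left (a := (0:ℝ)) (b := π/2)
      (fun u => Real.sin u ^ m) (c := (2:ℝ)) two_ne_zero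
    simp only [mul_zero] at this
    rw [this, show (2:ℝ)*(π/2) = π by ring]
    norm_num
    rfl
  have hIpos : ∀ n, 0 < I n := fun n => by simpa [hI] using integral_sin_pow_pos (n := n)
  have hImono : ∀ n, I (n+1) ≤ I n := fun n => integral_sin_pow_succ_le n
  -- gaussian
  have hg : (∫ x : ℝ, Real.exp (-(2 * m * x ^ 2))) = Real.sqrt (π / (2 * m)) := by
    have : ∀ x : ℝ, -(2 * (m:ℝ) * x ^ 2) = -(2 * (m:ℝ)) * x ^ 2 := fun x => by ring
    simp_rw [this]
    exact integral_gaussian (2 * m)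
  refine ⟨?_, ?_, hg⟩
  · -- lower bound: √(π/(2m)) ≤ I m
    rw [hsub]
    have key : π / (2 * m) ≤ (I m) ^ 2 := by
      have h1 : ((m:ℝ) + 1) * (I (m+1) * I m) = 2 * π := wallis_prod m
      have h2 : I (m+1) * I m ≤ I m * I m := by
        have := hImono m
        nlinarith [(hIpos m).le]
      have h3 : 2 * π / ((m:ℝ) + 1) ≤ (I m)^2 := by
        rw [div_le_iff₀ (by positivity)]
        nlinarith
      have h4 : π / (2 * m) ≤ 2 * π / ((m:ℝ) + 1) := by
        rw [div_le_div_iff₀ (by positivity) (by positivity)]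
        have hm1 : (1:ℝ) ≤ m := by exact_mod_cast hm
        nlinarith [pi_pos]
      linarith
    have := Real.sqrt_le_sqrt key
    rw [Real.sqrt_sq (hIpos m).le] at this
    linarith
  · rw [hsub, hg]
    obtain ⟨k, rfl⟩ := Nat.exists_eq_add_of_le hm
    have h1 : ((k:ℝ) + 1) * (I (k+1) * I k) = 2 * π := wallis_prod k
    have h2 : I (k+1) * I (k+1) ≤ I (k+1) * I k := by
      have := hImono k
      nlinarith [(hIpos (k+1)).le]
    have key : ((1:ℝ)/2 * I (k+1)) ^ 2 ≤ π / (2 * (1 + k : ℕ)) := by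
      push_cast
      have hk1 : (0:ℝ) < (k:ℝ) + 1 := by positivity
      rw [le_div_iff₀ (by positivity)]
      nlinarith
    calc (1:ℝ)/2 * I (1 + k) = Real.sqrt (((1:ℝ)/2 * I (k+1))^2) := by
          rw [Real.sqrt_sq (by nlinarith [(hIpos (k+1)).le]), Nat.add_comm]
        _ ≤ Real.sqrt (π / (2 * (1 + k : ℕ))) := Real.sqrt_le_sqrt key
end

section
/- Let B be an N×M complex matrix, A = B B†, f : ℝ → ℂ^N continuous, and let y : ℝ → ℂ^N be twice differentiable with ÿ(t) = −A y(t) + f(t) for all t. Define ψ(t) = (ẏ(t), i B† y(t)) ∈ ℂ^{N+M} and H = −[[0, B], [B†, 0]]. Then ψ satisfies ψ′(t) = −iH ψ(t) + (f(t), 0), i.e., the inhomogeneous Schrödinger-type equation whose forcing term is f(t) in the first N components and 0 in the last M components. -/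
open Matrix

/-- The inhomogeneous harmonic oscillator `ÿ = -A y + f` with `A = B Bᴴ`, in the
incidence-matrix reformulation: `ψ(t) = (ẏ(t), i Bᴴ y(t))` satisfies the forced
Schrödinger-type equation `ψ'(t) = -iH ψ(t) + (f(t), 0)` with
`H = -[[0, B], [Bᴴ, 0]]`. -/
theorem inhomogeneous_harmonic_oscillator_schrodinger
    {N M : ℕ} (B : Matrix (Fin N) (Fin M) ℂ) (A : Matrix (Fin N) (Fin N) ℂ)
    (hA : A = B * Bᴴ)
    (f : ℝ → Fin N → ℂ) (hf : Continuous f)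
    (y v a : ℝ → Fin N → ℂ)
    (hy : ∀ t, HasDerivAt y (v t) t)
    (hv : ∀ t, HasDerivAt v (a t) t)
    (ha : ∀ t, a t = -(A *ᵥ y t) + f t)
    (ψ : ℝ → (Fin N ⊕ Fin M → ℂ))
    (hψ : ψ = fun t => Sum.elim (v t) (Complex.I • (Bᴴ *ᵥ y t)))
    (H : Matrix (Fin N ⊕ Fin M) (Fin N ⊕ Fin M) ℂ)
    (hH : H = -Matrix.fromBlocks 0 B Bᴴ 0) :
    ∀ t, HasDerivAt ψ (-Complex.I • (H *ᵥ ψ t) + Sum.elim (f t) 0) t := by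
  intro t
  -- Compute the target derivative value
  have hval : -Complex.I • (H *ᵥ ψ t) + Sum.elim (f t) 0
      = Sum.elim (a t) (Complex.I • (Bᴴ *ᵥ v t)) := by
    subst hψ hH hA
    simp only [Matrix.neg_mulVec, smul_neg, neg_smul, neg_neg,
      Matrix.fromBlocks_mulVec, Matrix.mulVec_smul, Matrix.mulVec_mulVec,
      Matrix.zero_mulVec, add_zero, zero_add]
    funext x
    cases x with
    | inl i =>
      simp [Matrix.mulVec_smul, ha t, smul_eq_mul, ← mul_assoc, Complex.I_mul_I]
    | inr j =>
      simp
  rw [hval]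
  -- Now prove the derivative componentwise
  rw [hψ]
  apply hasDerivAt_pi.mpr
  intro x
  cases x with
  | inl i =>
    simpa using (hasDerivAt_pi.mp (hv t) i)
  | inr j =>
    have : ∀ s, Sum.elim (v s) (Complex.I • (Bᴴ *ᵥ y s)) (Sum.inr j)
        = Complex.I * ∑ k, Bᴴ j k * y s k := by
      intro s; simp [Matrix.mulVec, dotProduct]
    simp only [this]
    have hsum : HasDerivAt (fun s => ∑ k, Bᴴ j k * y s k)
        (∑ k, Bᴴ j k * v t k) t := by
      apply HasDerivAt.fun_sum
      intro k _
      exact (hasDerivAt_pi.mp (hy t) k).const_mul _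
    simpa [Matrix.mulVec, dotProduct] using hsum.const_mul Complex.I
end
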